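/- Let α ∈ ℂ, let U ⊆ ℂ be open, and let q₁, p₁, q₂, p₂ : ℂ → ℂ be differentiable on U and satisfy system (3): q₁' = q₁² + p₂, p₁' = −2 q₁ p₁ − α − 1/2, q₂' = −(1/2) p₂² + p₁ + t/2, p₂' = q₂ on U. Then u := −q₁ is four times complex differentiable on U and satisfies u'''' = −5 u' u'' + 5 u² u'' + 5 u (u')² − u⁵ + t u + α on U. -/

import Mathlib

/-- Conversely, if `(q₁,p₁,q₂,p₂)` solves the Hamiltonian system (3),
then `u := -q₁` is four times complex differentiable and solves the fourth-order
equation (1): `u'''' = -5 u' u'' + 5 u² u'' + 5 u (u')² - u⁵ + t u + α`. -/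
theorem stmt1 (α : ℂ) (U : Set ℂ) (hU : IsOpen U) (q1 p1 q2 p2 : ℂ → ℂ)
    (hq1 : ∀ t ∈ U, HasDerivAt q1 (q1 t ^ 2 + p2 t) t)
    (hp1 : ∀ t ∈ U, HasDerivAt p1 (-2 * q1 t * p1 t - α - 1/2) t)
    (hq2 : ∀ t ∈ U, HasDerivAt q2 (-(1/2) * p2 t ^ 2 + p1 t + t / 2) t)
    (hp2 : ∀ t ∈ U, HasDerivAt p2 (q2 t) t) :
    ∀ t ∈ U,
      (HasDerivAt (fun s => -q1 s) (deriv (fun s => -q1 s) t) t) ∧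
      (HasDerivAt (deriv (fun s => -q1 s)) (deriv (deriv (fun s => -q1 s)) t) t) ∧
      (HasDerivAt (deriv (deriv (fun s => -q1 s)))
        (deriv (deriv (deriv (fun s => -q1 s))) t) t) ∧
      (HasDerivAt (deriv (deriv (deriv (fun s => -q1 s))))
        (deriv (deriv (deriv (deriv (fun s => -q1 s)))) t) t) ∧
      deriv (deriv (deriv (deriv (fun s => -q1 s)))) t =
        -5 * deriv (fun s => -q1 s) t * deriv (deriv (fun s => -q1 s)) t
          + 5 * (-q1 t) ^ 2 * deriv (deriv (fun s => -q1 s)) t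
          + 5 * (-q1 t) * (deriv (fun s => -q1 s) t) ^ 2
          - (-q1 t) ^ 5 + t * (-q1 t) + α := by
  set u : ℂ → ℂ := fun s => -q1 s with hudef
  set v1 : ℂ → ℂ := fun s => -(q1 s ^ 2 + p2 s) with hv1
  set v2 : ℂ → ℂ := fun s => -(2 * q1 s * (q1 s ^ 2 + p2 s) + q2 s) with hv2
  set v3 : ℂ → ℂ := fun s =>
    -(2 * (q1 s ^ 2 + p2 s) * (q1 s ^ 2 + p2 s)
      + 2 * q1 s * (2 * q1 s * (q1 s ^ 2 + p2 s) + q2 s)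
      + (-(1/2) * p2 s ^ 2 + p1 s + s / 2)) with hv3
  set v4 : ℂ → ℂ := fun s =>
    -6 * (q1 s ^ 2 + p2 s) * (2 * q1 s * (q1 s ^ 2 + p2 s) + q2 s)
      - 4 * q1 s * (q1 s ^ 2 + p2 s) ^ 2
      - 4 * q1 s ^ 2 * (2 * q1 s * (q1 s ^ 2 + p2 s) + q2 s)
      + q1 s * p2 s ^ 2 - s * q1 s + p2 s * q2 s + α with hv4
  have hd1 : ∀ s ∈ U, HasDerivAt u (v1 s) s := fun s hs => (hq1 s hs).neg
  have e1 : Set.EqOn (deriv u) v1 U := fun s hs => (hd1 s hs).deriv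
  have hd2 : ∀ s ∈ U, HasDerivAt v1 (v2 s) s := by
    intro s hs
    have h := (((hq1 s hs).pow 2).add (hp2 s hs)).neg
    convert h using 1
    all_goals first | rfl | (simp [hv1, hv2]; done) | (funext x; simp [hv1, hv2])
  have hd2' : ∀ s ∈ U, HasDerivAt (deriv u) (v2 s) s := fun s hs =>
    (hd2 s hs).congr_of_eventuallyEq
      (Filter.eventuallyEq_of_mem (hU.mem_nhds hs) e1)
  have e2 : Set.EqOn (deriv (deriv u)) v2 U := fun s hs => (hd2' s hs).deriv
  have hd3 : ∀ s ∈ U, HasDerivAt v2 (v3 s) s := by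
    intro s hs
    have hA := ((hq1 s hs).pow 2).add (hp2 s hs)
    have h := ((((hq1 s hs).const_mul 2).mul hA).add (hq2 s hs)).neg
    convert h using 1
    all_goals first | rfl | (simp [hv2, hv3]; done) | (funext x; simp [hv2, hv3]) | (simp [hv3]; ring)
  have hd3' : ∀ s ∈ U, HasDerivAt (deriv (deriv u)) (v3 s) s := fun s hs =>
    (hd3 s hs).congr_of_eventuallyEq
      (Filter.eventuallyEq_of_mem (hU.mem_nhds hs) e2)
  have e3 : Set.EqOn (deriv (deriv (deriv u))) v3 U := fun s hs => (hd3' s hs).deriv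
  have hd4 : ∀ s ∈ U, HasDerivAt v3 (v4 s) s := by
    intro s hs
    have hA := ((hq1 s hs).pow 2).add (hp2 s hs)
    have hB := (((hq1 s hs).const_mul 2).mul hA).add (hq2 s hs)
    have hC := ((((hp2 s hs).pow 2).const_mul (-(1/2))).add (hp1 s hs)).add
      ((hasDerivAt_id s).div_const 2)
    have h := (((hA.const_mul 2).mul hA).add
      (((hq1 s hs).const_mul 2).mul hB)).add hC |>.neg
    convert h using 1
    all_goals first | rfl | (simp [hv3, hv4]; done) | (funext x; simp [hv3, hv4]) | (simp [hv4]; ring)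
  have hd4' : ∀ s ∈ U, HasDerivAt (deriv (deriv (deriv u))) (v4 s) s := fun s hs =>
    (hd4 s hs).congr_of_eventuallyEq
      (Filter.eventuallyEq_of_mem (hU.mem_nhds hs) e3)
  intro t ht
  refine ⟨?_, ?_, ?_, ?_, ?_⟩
  · rw [(hd1 t ht).deriv]; exact hd1 t ht
  · rw [(hd2' t ht).deriv]; exact hd2' t ht
  · rw [(hd3' t ht).deriv]; exact hd3' t ht
  · rw [(hd4' t ht).deriv]; exact hd4' t ht
  · rw [(hd4' t ht).deriv, (hd1 t ht).deriv, (hd2' t ht).deriv]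
    simp only [hv1, hv2, hv4]
    ring
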